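/- Let M be a smooth manifold. Then for every unital ℂ-algebra homomorphism χ: C^∞(M; ℂ) → ℂ there exists a unique point p ∈ M such that χ(f) = f(p) for every f ∈ C^∞(M; ℂ); that is, the map from M to the set of unital ℂ-algebra homomorphisms C^∞(M; ℂ) → ℂ sending a point to evaluation at that point is a bijection. -/

import Mathlib

open scoped Manifold

/-- `ℂ` is a smooth ring over `ℝ` (with its canonical model `𝓘(ℝ, ℂ)`). -/
instance : ContMDiffRing 𝓘(ℝ, ℂ) (⊤ : ℕ∞) ℂ where
  contMDiff_add := by
    rw [contMDiff_iff]
    refine ⟨continuous_add, fun x y => ?_⟩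
    simp only [mfld_simps, chartAt_self_eq]
    rw [contDiffOn_univ]
    exact contDiff_fst.add contDiff_snd
  contMDiff_mul := by
    rw [contMDiff_iff]
    refine ⟨continuous_mul, fun x y => ?_⟩
    simp only [mfld_simps, chartAt_self_eq]
    rw [contDiffOn_univ]
    exact contDiff_fst.mul contDiff_snd

/-- The algebra `C^∞(M; ℂ)` of smooth complex-valued functions on a smooth manifold `M`
is a `ℂ`-algebra, with `ℂ` acting by constant functions. -/
noncomputable instance smoothFunctionsComplexAlgebra
    {n : ℕ} (M : Type) [TopologicalSpace M]
    [ChartedSpace (EuclideanSpace ℝ (Fin n)) M] [IsManifold (𝓡 n) (⊤ : ℕ∞) M] :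
    Algebra ℂ C^(⊤ : ℕ∞)⟮𝓡 n, M; 𝓘(ℝ, ℂ), ℂ⟯ :=
  RingHom.toAlgebra
    { toFun := fun c => ContMDiffMap.const c
      map_one' := rfl
      map_mul' := fun _ _ => rfl
      map_zero' := rfl
      map_add' := fun _ _ => rfl }

section Stmt4Aux

open Set Filter Topology

variable {n : ℕ} {M : Type} [TopologicalSpace M]
  [ChartedSpace (EuclideanSpace ℝ (Fin n)) M] [IsManifold (𝓡 n) (⊤ : ℕ∞) M]

/-- Complexification of a smooth real-valued map. -/
noncomputable def Stmt4.toC (f : C^(⊤ : ℕ∞)⟮𝓡 n, M; 𝓘(ℝ), ℝ⟯) : C^(⊤ : ℕ∞)⟮𝓡 n, M; 𝓘(ℝ, ℂ), ℂ⟯ :=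
  ⟨fun x => (f x : ℂ), Complex.ofRealCLM.contMDiff.comp f.contMDiff⟩

@[simp] lemma Stmt4.toC_apply (f : C^(⊤ : ℕ∞)⟮𝓡 n, M; 𝓘(ℝ), ℝ⟯) (x : M) :
    Stmt4.toC f x = (f x : ℂ) := rfl

lemma Stmt4.algebraMap_apply (c : ℂ) (x : M) :
    (algebraMap ℂ C^(⊤ : ℕ∞)⟮𝓡 n, M; 𝓘(ℝ, ℂ), ℂ⟯ c) x = c := rfl

/-- A character does not vanish on a nowhere-vanishing smooth function. -/
lemma Stmt4.chi_ne_zero (χ : C^(⊤ : ℕ∞)⟮𝓡 n, M; 𝓘(ℝ, ℂ), ℂ⟯ →ₐ[ℂ] ℂ)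
    (f : C^(⊤ : ℕ∞)⟮𝓡 n, M; 𝓘(ℝ, ℂ), ℂ⟯) (hf : ∀ x, f x ≠ 0) : χ f ≠ 0 := by
  have hg : ContMDiff (𝓡 n) 𝓘(ℝ, ℂ) (⊤ : ℕ∞) fun x => (f x)⁻¹ := fun x =>
    ((contDiffAt_inv ℝ (hf x)).contMDiffAt).comp x (f.contMDiff x)
  set ginv : C^(⊤ : ℕ∞)⟮𝓡 n, M; 𝓘(ℝ, ℂ), ℂ⟯ := ⟨fun x => (f x)⁻¹, hg⟩ with hginv
  have hfg : f * ginv = 1 := by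
    ext x
    show f x * (f x)⁻¹ = 1
    exact mul_inv_cancel₀ (hf x)
  intro h0
  have h1 : χ f * χ ginv = 1 := by rw [← map_mul, hfg, map_one]
  rw [h0, zero_mul] at h1
  exact zero_ne_one h1

/-- A character takes real values on real-valued smooth functions. -/
lemma Stmt4.chi_im_zero (χ : C^(⊤ : ℕ∞)⟮𝓡 n, M; 𝓘(ℝ, ℂ), ℂ⟯ →ₐ[ℂ] ℂ)
    (f : C^(⊤ : ℕ∞)⟮𝓡 n, M; 𝓘(ℝ, ℂ), ℂ⟯) (hf : ∀ x, (f x).im = 0) : (χ f).im = 0 := by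
  by_contra h
  have h0 : χ (f - algebraMap ℂ _ (χ f)) = 0 := by
    rw [map_sub, AlgHom.commutes, Algebra.algebraMap_self_apply, sub_self]
  refine Stmt4.chi_ne_zero χ _ (fun x hx => ?_) h0
  have hsub : ((f - algebraMap ℂ C^(⊤ : ℕ∞)⟮𝓡 n, M; 𝓘(ℝ, ℂ), ℂ⟯ (χ f)) x) = f x - χ f := rfl
  rw [hx] at hsub
  apply h
  have h2 := congrArg Complex.im hsub
  simp [Complex.sub_im, hf x] at h2
  linarith

/-- A smooth function on a σ-compact manifold that is large outside compact sets. -/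
lemma Stmt4.exists_proper [T2Space M] [SecondCountableTopology M] :
    ∃ φ : C^(⊤ : ℕ∞)⟮𝓡 n, M; 𝓘(ℝ), ℝ⟯, ∀ r : ℝ, ∃ K : Set M, IsCompact K ∧ ∀ x ∉ K, r ≤ φ x := by
  haveI : LocallyCompactSpace M := ChartedSpace.locallyCompactSpace (EuclideanSpace ℝ (Fin n)) M
  set K := CompactExhaustion.choice M with hK
  have hsep : ∀ m : ℕ, ∃ f : C^(⊤ : ℕ∞)⟮𝓡 n, M; 𝓘(ℝ), ℝ⟯,
      EqOn f 0 (K m) ∧ EqOn f 1 (interior (K (m + 1)))ᶜ ∧ ∀ x, f x ∈ Icc (0:ℝ) 1 := fun m =>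
    exists_contMDiffMap_zero_one_of_isClosed (𝓡 n) ((K.isCompact m).isClosed)
      isOpen_interior.isClosed_compl
      (disjoint_compl_right_iff_subset.2 (K.subset_interior_succ m))
  choose f hf0 hf1 hf01 using hsep
  have hvan : ∀ (x : M) (m j : ℕ), m ≤ j → x ∈ K m → f j x = 0 := fun x m j hj hx =>
    hf0 j (K.subset hj hx)
  have hsummable : ∀ x : M, Summable fun m => f m x := by
    intro x
    apply summable_of_ne_finset_zero (s := Finset.range (K.find x + 1))
    intro m hm
    exact hvan x (K.find x) m (by simp [Finset.mem_range] at hm; omega) (K.mem_find x)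
  set φf : M → ℝ := fun x => ∑' m, f m x with hφf
  have hloc : ∀ (m : ℕ) (y : M), y ∈ K m → φf y = ∑ j ∈ Finset.range m, f j y := by
    intro m y hy
    exact tsum_eq_sum fun j hj => hvan y m j (by simp [Finset.mem_range] at hj; omega) hy
  have hsmooth : ContMDiff (𝓡 n) 𝓘(ℝ) (⊤ : ℕ∞) φf := by
    intro x
    set m := K.find x + 1 with hm
    set S : C^(⊤ : ℕ∞)⟮𝓡 n, M; 𝓘(ℝ), ℝ⟯ := ∑ j ∈ Finset.range m, f j with hS
    have hSy : ∀ y : M, S y = ∑ j ∈ Finset.range m, f j y := by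
      intro y
      have : (⇑(∑ j ∈ Finset.range m, f j) : M → ℝ) = ∑ j ∈ Finset.range m, ⇑(f j) :=
        map_sum (ContMDiffMap.coeFnAddMonoidHom : C^(⊤ : ℕ∞)⟮𝓡 n, M; 𝓘(ℝ), ℝ⟯ →+ (M → ℝ)) f
          (Finset.range m)
      rw [hS, this, Finset.sum_apply]
    have hev : φf =ᶠ[𝓝 x] S := by
      have hxm : x ∈ interior (K m) := K.subset_interior_succ _ (K.mem_find x)
      filter_upwards [isOpen_interior.mem_nhds hxm] with y hy
      rw [hloc m y (interior_subset hy), hSy y]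
    exact (S.contMDiff x).congr_of_eventuallyEq hev
  have hlb : ∀ (m : ℕ) (x : M), x ∉ K (m + 1) → (m + 1 : ℝ) ≤ φf x := by
    intro m x hx
    have h1 : ∀ j ∈ Finset.range (m + 1), f j x = 1 := by
      intro j hj
      refine hf1 j ?_
      intro hmem
      exact hx (K.subset (by simp [Finset.mem_range] at hj; omega) (interior_subset hmem))
    have h2 : (m + 1 : ℝ) = ∑ j ∈ Finset.range (m + 1), f j x := by
      rw [Finset.sum_congr rfl h1]; simp
    rw [h2]
    exact Summable.sum_le_tsum (Finset.range (m + 1)) (fun j _ => (hf01 j x).1) (hsummable x)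
  refine ⟨⟨φf, hsmooth⟩, fun r => ?_⟩
  obtain ⟨m, hm⟩ := exists_nat_ge r
  refine ⟨K (m + 1), K.isCompact _, fun x hx => ?_⟩
  calc r ≤ m := hm
  _ ≤ (m + 1 : ℝ) := by linarith
  _ ≤ φf x := hlb m x hx

/-- Existence of the point: every character is a point evaluation. -/
lemma Stmt4.exists_point [T2Space M] [SecondCountableTopology M]
    (χ : C^(⊤ : ℕ∞)⟮𝓡 n, M; 𝓘(ℝ, ℂ), ℂ⟯ →ₐ[ℂ] ℂ) :
    ∃ p : M, ∀ f : C^(⊤ : ℕ∞)⟮𝓡 n, M; 𝓘(ℝ, ℂ), ℂ⟯, χ f = f p := by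
  by_contra hcon
  push_neg at hcon
  -- for each `p`, a real-valued nonnegative function annihilated by `χ` positive at `p`
  have hg : ∀ p : M, ∃ g : C^(⊤ : ℕ∞)⟮𝓡 n, M; 𝓘(ℝ, ℂ), ℂ⟯,
      χ g = 0 ∧ (∀ x, (g x).im = 0 ∧ 0 ≤ (g x).re) ∧ 0 < (g p).re := by
    intro p
    obtain ⟨f, hf⟩ := hcon p
    set F := f - algebraMap ℂ C^(⊤ : ℕ∞)⟮𝓡 n, M; 𝓘(ℝ, ℂ), ℂ⟯ (χ f) with hFdef
    have hχF : χ F = 0 := by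
      rw [hFdef, map_sub, AlgHom.commutes, Algebra.algebraMap_self_apply, sub_self]
    have hFx : ∀ x : M, F x = f x - χ f := fun _ => rfl
    have hFp : F p ≠ 0 := by
      rw [hFx p, sub_ne_zero]
      exact fun hc => hf hc.symm
    set u : C^(⊤ : ℕ∞)⟮𝓡 n, M; 𝓘(ℝ), ℝ⟯ :=
      ⟨fun x => (F x).re, Complex.reCLM.contMDiff.comp F.contMDiff⟩ with hu
    set v : C^(⊤ : ℕ∞)⟮𝓡 n, M; 𝓘(ℝ), ℝ⟯ :=
      ⟨fun x => (F x).im, Complex.imCLM.contMDiff.comp F.contMDiff⟩ with hv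
    have hdecomp : F = Stmt4.toC u + algebraMap ℂ _ Complex.I * Stmt4.toC v := by
      ext x
      show F x = (((F x).re : ℂ)) + Complex.I * ((F x).im : ℂ)
      rw [mul_comm]
      exact (Complex.re_add_im (F x)).symm
    have hru : (χ (Stmt4.toC u)).im = 0 :=
      Stmt4.chi_im_zero χ _ (fun x => by simp)
    have hrv : (χ (Stmt4.toC v)).im = 0 :=
      Stmt4.chi_im_zero χ _ (fun x => by simp)
    have hsum : χ (Stmt4.toC u) + Complex.I * χ (Stmt4.toC v) = 0 := by
      have h := hχF
      rw [hdecomp, map_add, map_mul, AlgHom.commutes, Algebra.algebraMap_self_apply] at h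
      exact h
    have hu0 : χ (Stmt4.toC u) = 0 := by
      have hre := congrArg Complex.re hsum
      simp [Complex.add_re, Complex.mul_re, hrv] at hre
      exact Complex.ext hre hru
    have hv0 : χ (Stmt4.toC v) = 0 := by
      have him := congrArg Complex.im hsum
      simp [Complex.add_im, Complex.mul_im, hru, hrv] at him
      exact Complex.ext him hrv
    refine ⟨Stmt4.toC u * Stmt4.toC u + Stmt4.toC v * Stmt4.toC v, ?_, ?_, ?_⟩
    · rw [map_add, map_mul, map_mul, hu0, hv0]; ring
    · intro x
      have hx : (Stmt4.toC u * Stmt4.toC u + Stmt4.toC v * Stmt4.toC v) x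
          = ((u x : ℂ)) * (u x) + (v x) * (v x) := rfl
      constructor
      · rw [hx]; simp
      · rw [hx]
        simp only [Complex.add_re, Complex.mul_re, Complex.ofReal_re, Complex.ofReal_im]
        nlinarith [sq_nonneg (u x), sq_nonneg (v x)]
    · have hx : (Stmt4.toC u * Stmt4.toC u + Stmt4.toC v * Stmt4.toC v) p
          = ((u p : ℂ)) * (u p) + (v p) * (v p) := rfl
      rw [hx]
      simp only [Complex.add_re, Complex.mul_re, Complex.ofReal_re, Complex.ofReal_im]
      have : u p ≠ 0 ∨ v p ≠ 0 := by
        by_contra hcon'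
        push_neg at hcon'
        apply hFp
        have h1 : (F p).re = 0 := hcon'.1
        have h2 : (F p).im = 0 := hcon'.2
        exact Complex.ext h1 h2
      rcases this with h | h
      · nlinarith [sq_nonneg (v p), sq_nonneg (u p), mul_self_pos.2 h]
      · nlinarith [sq_nonneg (u p), mul_self_pos.2 h]
  choose g hg0 hgprop hgp using hg
  obtain ⟨φ, hφ⟩ := Stmt4.exists_proper (n := n) (M := M)
  set c := χ (Stmt4.toC φ) with hc
  have hcim : c.im = 0 := Stmt4.chi_im_zero χ _ (fun x => by simp)
  set H := (Stmt4.toC φ - algebraMap ℂ _ c) * (Stmt4.toC φ - algebraMap ℂ _ c) with hHdef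
  have hχH : χ H = 0 := by
    rw [hHdef, map_mul, map_sub, AlgHom.commutes, Algebra.algebraMap_self_apply, hc, sub_self, zero_mul]
  have hHx : ∀ x : M, H x = ((φ x : ℂ) - c) * ((φ x : ℂ) - c) := fun _ => rfl
  have hHim : ∀ x : M, (H x).im = 0 := by
    intro x
    rw [hHx x]
    simp [Complex.mul_im, Complex.sub_im, Complex.ofReal_im, hcim]
  have hHre : ∀ x : M, (H x).re = (φ x - c.re) ^ 2 := by
    intro x
    rw [hHx x]
    simp [Complex.mul_re, Complex.sub_re, Complex.sub_im, Complex.ofReal_im, Complex.ofReal_re,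
      hcim]
    ring
  obtain ⟨Kc, hKc, hKφ⟩ := hφ (c.re + 1)
  obtain ⟨t, ht⟩ := hKc.elim_finite_subcover (fun p => {x | 0 < (g p x).re})
    (fun p => isOpen_lt continuous_const (Complex.continuous_re.comp (g p).contMDiff.continuous))
    (fun x _ => Set.mem_iUnion.2 ⟨x, hgp x⟩)
  set G := H + ∑ p ∈ t, g p with hGdef
  have hχG : χ G = 0 := by
    rw [hGdef, map_add, map_sum, hχH]
    rw [Finset.sum_congr rfl fun p _ => hg0 p]
    simp
  have hGx : ∀ x : M, G x = H x + ∑ p ∈ t, g p x := by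
    intro x
    have : (⇑(∑ p ∈ t, g p) : M → ℂ) = ∑ p ∈ t, ⇑(g p) :=
      map_sum (ContMDiffMap.coeFnAddMonoidHom : C^(⊤ : ℕ∞)⟮𝓡 n, M; 𝓘(ℝ, ℂ), ℂ⟯ →+ (M → ℂ)) g t
    rw [hGdef]
    show H x + (∑ p ∈ t, g p) x = _
    rw [this, Finset.sum_apply]
  have hGpos : ∀ x : M, 0 < (G x).re := by
    intro x
    have hsumre : ((∑ p ∈ t, g p x : ℂ)).re = ∑ p ∈ t, (g p x).re := by
      exact map_sum Complex.reAddGroupHom (fun p => g p x) t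
    have hterm : ∀ p ∈ t, 0 ≤ (g p x).re := fun p _ => (hgprop p x).2
    rw [hGx x, Complex.add_re, hsumre]
    by_cases hx : x ∈ Kc
    · obtain ⟨p, hpt, hpx⟩ := Set.mem_iUnion₂.1 (ht hx)
      have h1 : 0 < ∑ p ∈ t, (g p x).re :=
        Finset.sum_pos' hterm ⟨p, hpt, hpx⟩
      have h2 : 0 ≤ (H x).re := by rw [hHre x]; positivity
      linarith
    · have h1 : (1 : ℝ) ≤ (φ x - c.re) ^ 2 := by
        have := hKφ x hx
        nlinarith
      have h2 : 0 ≤ ∑ p ∈ t, (g p x).re := Finset.sum_nonneg hterm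
      rw [hHre x]
      linarith
  refine Stmt4.chi_ne_zero χ G (fun x hx => ?_) hχG
  have h := hGpos x
  rw [hx] at h
  simp at h

end Stmt4Aux

/-- Every unital `ℂ`-algebra homomorphism `χ : C^∞(M; ℂ) → ℂ` on a (finite-dimensional,
Hausdorff, second countable) smooth manifold `M` is evaluation at a unique point `p ∈ M`;
i.e., the map from `M` to the characters of `C^∞(M; ℂ)`, sending a point to evaluation at
that point, is a bijection. -/
theorem stmt_4 {n : ℕ} (M : Type) [TopologicalSpace M] [T2Space M]
    [SecondCountableTopology M]
    [ChartedSpace (EuclideanSpace ℝ (Fin n)) M] [IsManifold (𝓡 n) (⊤ : ℕ∞) M]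
    (χ : C^(⊤ : ℕ∞)⟮𝓡 n, M; 𝓘(ℝ, ℂ), ℂ⟯ →ₐ[ℂ] ℂ) :
    ∃! p : M, ∀ f : C^(⊤ : ℕ∞)⟮𝓡 n, M; 𝓘(ℝ, ℂ), ℂ⟯, χ f = f p := by
  haveI : LocallyCompactSpace M := ChartedSpace.locallyCompactSpace (EuclideanSpace ℝ (Fin n)) M
  obtain ⟨p, hp⟩ := Stmt4.exists_point χ
  refine ⟨p, hp, fun q hq => ?_⟩
  by_contra hne
  obtain ⟨f, hf0, hf1, -⟩ := exists_contMDiffMap_zero_one_of_isClosed (𝓡 n) (n := (⊤ : ℕ∞))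
    (isClosed_singleton (x := q)) (isClosed_singleton (x := p))
    (Set.disjoint_singleton.2 hne)
  have h1 : χ (Stmt4.toC f) = 1 := by
    rw [hp (Stmt4.toC f), Stmt4.toC_apply, hf1 rfl]
    simp
  have h0 : χ (Stmt4.toC f) = 0 := by
    rw [hq (Stmt4.toC f), Stmt4.toC_apply, hf0 rfl]
    simp
  rw [h0] at h1
  exact zero_ne_one h1
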